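/- Lemma 4 (true count algebra, general form): Let p ≥ 0, q ≥ 0 and k ≥ 1 with p + k + q ≤ N − 1, let s be a sequence of length p of elements of W, and let v₀,…,v_q ∈ W. Then, as an identity of integers, ∑_{(i_1,…,i_k) ∈ W^k} [∏_{m=1}^{k} l^{s·(i_1,…,i_{m−1})}(i_m)] · [∏_{j=0}^{q} l^{s·(i_1,…,i_k)·(v₀,…,v_{j−1})}(v_j)] = (N−p−q−1)(N−p−q−2)⋯(N−p−q−k) · ∏_{j=0}^{q} l^{s·(v₀,…,v_{j−1})}(v_j). -/

import Mathlib

/-- The depleted count: `l^s(v) = l(v) - #{i : s_i = v}`, the number of cards of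
weight `v` remaining once the sequence `s` of cards has been removed from a deck
whose count function is `l`. -/
def depletedCount {W : Type*} [DecidableEq W] (l : W → ℤ) (s : List W) (v : W) : ℤ :=
  l v - s.count v

namespace TCA4

variable {W : Type*} [Fintype W] [DecidableEq W]


variable {W : Type*} [Fintype W] [DecidableEq W]

def prodDep (l : W → ℤ) : List W → List W → ℤ
  | _, [] => 1
  | s, v :: t => depletedCount l s v * prodDep l (s ++ [v]) t

lemma prodDep_congr (l : W → ℤ) : ∀ (t s s' : List W),
    (∀ x, s.count x = s'.count x) → prodDep l s t = prodDep l s' t := by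
  intro t
  induction t with
  | nil => intro s s' _; rfl
  | cons v t ih =>
    intro s s' h
    simp only [prodDep, depletedCount, h v]
    congr 1
    exact ih _ _ fun x => by simp [List.count_append, h x]

lemma sum_count (s : List W) : ∑ w : W, (s.count w : ℤ) = s.length := by
  induction s with
  | nil => simp
  | cons a s ih =>
    simp only [List.count_cons, List.length_cons]
    push_cast
    rw [Finset.sum_add_distrib, ih]
    simp

lemma sumA (l : W → ℤ) : ∀ (t s : List W),
    ∑ w : W, depletedCount l s w * prodDep l (s ++ [w]) t
      = ((∑ w, l w) - s.length - t.length) * prodDep l s t := by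
  intro t
  induction t with
  | nil =>
    intro s
    simp only [prodDep, mul_one, depletedCount]
    rw [Finset.sum_sub_distrib, sum_count]
    simp
  | cons v t ih =>
    intro s
    have key : ∀ w : W,
        depletedCount l s w * prodDep l (s ++ [w]) (v :: t)
          = depletedCount l (s ++ [v]) w * prodDep l ((s ++ [v]) ++ [w]) t
              * depletedCount l s v
            + (if w = v then 1 else 0) *
              ((depletedCount l s v - 1 - depletedCount l (s ++ [v]) w) *
                prodDep l ((s ++ [v]) ++ [w]) t) := by
      intro w
      have hre : prodDep l ((s ++ [w]) ++ [v]) t = prodDep l ((s ++ [v]) ++ [w]) t :=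
        prodDep_congr l t _ _ (fun x => by simp [List.count_append, List.count_cons]; ring)
      simp only [prodDep, hre]
      by_cases hwv : w = v
      · subst hwv
        have h1 : depletedCount l (s ++ [w]) w = depletedCount l s w - 1 := by
          simp [depletedCount, List.count_append]; ring
        simp only [if_pos rfl, h1]
        ring
      · have h1 : depletedCount l (s ++ [w]) v = depletedCount l s v := by
          simp [depletedCount, List.count_append, List.count_singleton',
            Ne.symm hwv, hwv]
        have h2 : depletedCount l (s ++ [v]) w = depletedCount l s w := by
          simp [depletedCount, List.count_append, List.count_singleton', hwv, Ne.symm hwv]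
        simp only [if_neg hwv, h1, h2]
        ring
    rw [Finset.sum_congr rfl (fun w _ => key w), Finset.sum_add_distrib]
    rw [← Finset.sum_mul, ih (s ++ [v])]
    have h3 : ∑ w : W, (if w = v then (1:ℤ) else 0) *
        ((depletedCount l s v - 1 - depletedCount l (s ++ [v]) w) *
          prodDep l ((s ++ [v]) ++ [w]) t) = 0 := by
      rw [Finset.sum_eq_single v]
      · have : depletedCount l (s ++ [v]) v = depletedCount l s v - 1 := by
          simp [depletedCount, List.count_append]; ring
        simp [this]
      · intro b _ hb; simp [hb]
      · simp
    rw [h3, add_zero]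
    simp only [prodDep, List.length_append, List.length_cons, List.length_nil]
    push_cast
    ring

lemma sumB (l : W → ℤ) : ∀ (k : ℕ) (s t : List W),
    ∑ i : Fin k → W, prodDep l s (List.ofFn i) * prodDep l (s ++ List.ofFn i) t
      = (∏ m : Fin k, ((∑ w, l w) - s.length - t.length - (m : ℕ))) * prodDep l s t := by
  intro k
  induction k with
  | zero =>
    intro s t
    simp [prodDep]
  | succ k ih =>
    intro s t
    rw [← Equiv.sum_comp (Fin.consEquiv (fun _ : Fin (k+1) => W))
      (fun i => prodDep l s (List.ofFn i) * prodDep l (s ++ List.ofFn i) t),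
      Fintype.sum_prod_type]
    have hof : ∀ (w : W) (i : Fin k → W),
        List.ofFn (Fin.consEquiv (fun _ : Fin (k+1) => W) (w, i)) = w :: List.ofFn i := by
      intro w i
      rw [List.ofFn_succ]
      simp [Fin.consEquiv]
    calc ∑ w : W, ∑ i : Fin k → W,
            prodDep l s (List.ofFn (Fin.consEquiv (fun _ : Fin (k+1) => W) (w, i))) *
              prodDep l (s ++ List.ofFn (Fin.consEquiv (fun _ : Fin (k+1) => W) (w, i))) t
        = ∑ w : W, depletedCount l s w *
            ((∏ m : Fin k, ((∑ w, l w) - (s ++ [w]).length - t.length - (m : ℕ))) *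
              prodDep l (s ++ [w]) t) := by
          refine Finset.sum_congr rfl fun w _ => ?_
          rw [← ih (s ++ [w]) t, Finset.mul_sum]
          refine Finset.sum_congr rfl fun i _ => ?_
          rw [hof w i]
          show depletedCount l s w * prodDep l (s ++ [w]) (List.ofFn i) *
              prodDep l (s ++ (w :: List.ofFn i)) t = _
          rw [show s ++ (w :: List.ofFn i) = (s ++ [w]) ++ List.ofFn i by simp]
          ring
      _ = (∏ m : Fin k, ((∑ w, l w) - s.length - 1 - t.length - (m : ℕ))) *
            ∑ w : W, depletedCount l s w * prodDep l (s ++ [w]) t := by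
          rw [Finset.mul_sum]
          refine Finset.sum_congr rfl fun w _ => ?_
          have : ∀ m : Fin k, ((∑ w, l w) - ((s ++ [w]).length : ℤ) - t.length - (m : ℕ))
              = ((∑ w, l w) - s.length - 1 - t.length - (m : ℕ)) := by
            intro m; simp [List.length_append]; ring
          rw [Finset.prod_congr rfl fun m _ => this m]
          ring
      _ = (∏ m : Fin (k+1), ((∑ w, l w) - s.length - t.length - (m : ℕ))) * prodDep l s t := by
          rw [sumA l t s, Fin.prod_univ_succ]
          have : ∀ m : Fin k, ((∑ w, l w) - (s.length : ℤ) - t.length - ((m.succ : Fin (k+1)) : ℕ))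
              = ((∑ w, l w) - s.length - 1 - t.length - (m : ℕ)) := by
            intro m
            have : ((m.succ : Fin (k+1)) : ℕ) = (m : ℕ) + 1 := rfl
            rw [this]; push_cast; ring
          rw [Finset.prod_congr rfl fun m _ => this m]
          simp only [Fin.val_zero, Nat.cast_zero, sub_zero]
          ring

lemma prod_take (l : W → ℤ) : ∀ (k : ℕ) (s : List W) (i : Fin k → W),
    (∏ m : Fin k, depletedCount l (s ++ (List.ofFn i).take m) (i m))
      = prodDep l s (List.ofFn i) := by
  intro k
  induction k with
  | zero => intro s i; simp [prodDep]
  | succ k ih =>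
    intro s i
    rw [Fin.prod_univ_succ, List.ofFn_succ, prodDep]
    congr 1
    · simp
    · rw [← ih (s ++ [i 0]) (fun j => i j.succ)]
      refine Finset.prod_congr rfl fun m _ => ?_
      have h1 : ((m.succ : Fin (k+1)) : ℕ) = (m : ℕ) + 1 := rfl
      rw [h1, List.take_succ_cons]
      simp

end TCA4

/-- **Lemma 4 (true count algebra, general form).** Let `W` be a finite type of
weights, `l : W → ℤ` a count function with `N = ∑ w, l w`. For `p, q ≥ 0`, `k ≥ 1`
with `p + k + q ≤ N - 1`, a sequence `s` of length `p`, and `v₀, …, v_q ∈ W`: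
`∑_{(i₁,…,i_k) ∈ W^k} [∏_{m=1}^{k} l^{s·(i₁,…,i_{m-1})}(i_m)]
    · [∏_{j=0}^{q} l^{s·(i₁,…,i_k)·(v₀,…,v_{j-1})}(v_j)]
  = (N-p-q-1)(N-p-q-2)⋯(N-p-q-k) · ∏_{j=0}^{q} l^{s·(v₀,…,v_{j-1})}(v_j)`. -/
theorem true_count_algebra_lemma4 {W : Type*} [Fintype W] [DecidableEq W]
    (l : W → ℤ) (p q k : ℕ) (s : List W) (hs : s.length = p) (hk : 1 ≤ k)
    (hpqk : (p : ℤ) + k + q ≤ (∑ w, l w) - 1) (v : Fin (q + 1) → W) :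
    ∑ i : Fin k → W,
        (∏ m : Fin k, depletedCount l (s ++ (List.ofFn i).take m) (i m)) *
          ∏ j : Fin (q + 1),
            depletedCount l (s ++ List.ofFn i ++ (List.ofFn v).take j) (v j)
      = (∏ m : Fin k, ((∑ w, l w) - p - q - 1 - (m : ℕ))) *
          ∏ j : Fin (q + 1), depletedCount l (s ++ (List.ofFn v).take j) (v j) := by
  have key := TCA4.sumB l k s (List.ofFn v)
  calc ∑ i : Fin k → W,
        (∏ m : Fin k, depletedCount l (s ++ (List.ofFn i).take m) (i m)) *
          ∏ j : Fin (q + 1),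
            depletedCount l (s ++ List.ofFn i ++ (List.ofFn v).take j) (v j)
      = ∑ i : Fin k → W, TCA4.prodDep l s (List.ofFn i) *
          TCA4.prodDep l (s ++ List.ofFn i) (List.ofFn v) := by
        refine Finset.sum_congr rfl fun i _ => ?_
        rw [TCA4.prod_take l k s i, TCA4.prod_take l (q+1) (s ++ List.ofFn i) v]
    _ = (∏ m : Fin k, ((∑ w, l w) - s.length - (List.ofFn v).length - (m : ℕ))) *
          TCA4.prodDep l s (List.ofFn v) := key
    _ = (∏ m : Fin k, ((∑ w, l w) - p - q - 1 - (m : ℕ))) *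
          ∏ j : Fin (q + 1), depletedCount l (s ++ (List.ofFn v).take j) (v j) := by
        rw [TCA4.prod_take l (q+1) s v]
        congr 1
        refine Finset.prod_congr rfl fun m _ => ?_
        rw [hs, List.length_ofFn]
        push_cast
        ring
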